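/- Let κ ∈ (0,1] and let Ξ be the linear map on d×d matrices which fixes 1, multiplies diagonal traceless parts (in a fixed orthonormal basis) by γ, and multiplies off-diagonal matrix units by γ/κ. If γ ≤ 2κ/(d + 2κ − dκ), then Ξ is a positive map: Ξ(X) ≥ 0 for every X ≥ 0. -/

import Mathlib

open Matrix BigOperators ComplexOrder

lemma key_ineq {d : ℕ} (u w : Fin d → ℂ) :
    2 * ∑ i, Complex.normSq (u i * w i) ≤
      (∑ i, Complex.normSq (u i)) * (∑ i, Complex.normSq (w i))
        + Complex.normSq (∑ i, u i * (starRingEnd ℂ) (w i)) := by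
  have hterm : ∀ i j : Fin d, (1/2 : ℝ) * Complex.normSq (u i * w j + u j * w i)
      = (1/2) * (Complex.normSq (u i) * Complex.normSq (w j))
        + (1/2) * (Complex.normSq (u j) * Complex.normSq (w i))
        + ((u i * (starRingEnd ℂ) (w i)) * (starRingEnd ℂ) (u j * (starRingEnd ℂ) (w j))).re := by
    intro i j
    rw [Complex.normSq_add]
    have h2 : (u i * w j * (starRingEnd ℂ) (u j * w i))
        = (u i * (starRingEnd ℂ) (w i)) * (starRingEnd ℂ) (u j * (starRingEnd ℂ) (w j)) := by
      simp only [_root_.map_mul, Complex.conj_conj]; ring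
    rw [h2, Complex.normSq_mul, Complex.normSq_mul]
    ring
  have hident :
      (∑ i, Complex.normSq (u i)) * (∑ i, Complex.normSq (w i))
        + Complex.normSq (∑ i, u i * (starRingEnd ℂ) (w i))
      = ∑ i, ∑ j, (1/2 : ℝ) * Complex.normSq (u i * w j + u j * w i) := by
    simp_rw [hterm, Finset.sum_add_distrib]
    have e1 : ∑ i : Fin d, ∑ j : Fin d,
        (1/2 : ℝ) * (Complex.normSq (u i) * Complex.normSq (w j))
        = (1/2) * ((∑ i, Complex.normSq (u i)) * (∑ i, Complex.normSq (w i))) := by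
      rw [Finset.sum_mul_sum]
      rw [Finset.mul_sum]
      exact Finset.sum_congr rfl fun i _ => by rw [Finset.mul_sum]
    have e2 : ∑ i : Fin d, ∑ j : Fin d,
        (1/2 : ℝ) * (Complex.normSq (u j) * Complex.normSq (w i))
        = (1/2) * ((∑ i, Complex.normSq (u i)) * (∑ i, Complex.normSq (w i))) := by
      rw [Finset.sum_comm]
      rw [Finset.sum_mul_sum]
      rw [Finset.mul_sum]
      exact Finset.sum_congr rfl fun i _ => by rw [Finset.mul_sum]
    have e3 : ∑ i : Fin d, ∑ j : Fin d,
        ((u i * (starRingEnd ℂ) (w i)) * (starRingEnd ℂ) (u j * (starRingEnd ℂ) (w j))).re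
        = Complex.normSq (∑ i, u i * (starRingEnd ℂ) (w i)) := by
      have : (Complex.normSq (∑ i, u i * (starRingEnd ℂ) (w i)) : ℂ)
          = (∑ i, u i * (starRingEnd ℂ) (w i)) * (starRingEnd ℂ) (∑ j, u j * (starRingEnd ℂ) (w j)) := by
        rw [← Complex.mul_conj]
      have h4 := congrArg Complex.re this
      rw [Complex.ofReal_re] at h4
      rw [h4, map_sum, Finset.sum_mul_sum, Complex.re_sum]
      exact Finset.sum_congr rfl fun i _ => (Complex.re_sum _ _).symm
    rw [e1, e2, e3]; ring
  rw [hident]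
  have hdiag : 2 * ∑ i, Complex.normSq (u i * w i)
      = ∑ i : Fin d, (1/2 : ℝ) * Complex.normSq (u i * w i + u i * w i) := by
    rw [Finset.mul_sum]
    exact Finset.sum_congr rfl fun i _ => by
      have : u i * w i + u i * w i = (2:ℂ) * (u i * w i) := by ring
      rw [this, Complex.normSq_mul]
      simp only [Complex.normSq_apply, Complex.mul_re, Complex.mul_im, Complex.add_re, Complex.add_im, Complex.re_ofNat, Complex.im_ofNat]
      ring
  rw [hdiag]
  apply Finset.sum_le_sum
  intro i _
  exact Finset.single_le_sum (f := fun j => (1/2 : ℝ) * Complex.normSq (u i * w j + u j * w i))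
    (fun j _ => mul_nonneg (by norm_num) (Complex.normSq_nonneg _)) (Finset.mem_univ i)

/-- Positivity bound: the map `Ξ` which fixes the identity, multiplies diagonal traceless
parts by `γ` and off-diagonal parts by `γ/κ` — explicitly
`Ξ X = (Tr X / d) 1 + γ (Δ X − (Tr X / d) 1) + (γ/κ)(X − Δ X)` with `Δ` the pinching onto
diagonal matrices — is a positive map whenever `γ ≤ 2κ/(d + 2κ − dκ)`. -/
theorem stmt_17 {d : ℕ} (hd : 2 ≤ d)
    (κ : ℝ) (hκ0 : 0 < κ) (hκ1 : κ ≤ 1)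
    (gam : ℝ) (hgam0 : 0 ≤ gam)
    (hbound : gam ≤ 2 * κ / ((d : ℝ) + 2 * κ - (d : ℝ) * κ))
    (Δ : Matrix (Fin d) (Fin d) ℂ → Matrix (Fin d) (Fin d) ℂ)
    (hΔ : ∀ X, Δ X = Matrix.diagonal (fun i => X i i))
    (Xi : Matrix (Fin d) (Fin d) ℂ → Matrix (Fin d) (Fin d) ℂ)
    (hXi : ∀ X, Xi X = (X.trace / (d : ℂ)) • (1 : Matrix (Fin d) (Fin d) ℂ)
      + (gam : ℂ) • (Δ X - (X.trace / (d : ℂ)) • 1)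
      + ((gam / κ : ℝ) : ℂ) • (X - Δ X)) :
    ∀ X : Matrix (Fin d) (Fin d) ℂ, X.PosSemidef → (Xi X).PosSemidef := by
  intro X hX
  obtain ⟨B, hB⟩ : ∃ B : Matrix (Fin d) (Fin d) ℂ, X = Bᴴ * B := by
    open scoped MatrixOrder in
    obtain ⟨B, hB⟩ := CStarAlgebra.nonneg_iff_eq_star_mul_self.mp hX.nonneg
    exact ⟨B, by rw [hB, Matrix.star_eq_conjTranspose]⟩
  set p : Fin d → ℝ := fun i => ∑ k, Complex.normSq (B k i) with hp
  have hXd : ∀ i, X i i = ((p i : ℝ) : ℂ) := by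
    intro i
    rw [hB, Matrix.mul_apply]
    push_cast [hp]
    exact Finset.sum_congr rfl fun k _ => by
      rw [Matrix.conjTranspose_apply]
      simp [Complex.star_def, ← Complex.normSq_eq_conj_mul_self]
  have htr : X.trace = ((∑ i, p i : ℝ) : ℂ) := by
    rw [Matrix.trace]
    push_cast
    exact Finset.sum_congr rfl fun i _ => hXd i
  refine Matrix.PosSemidef.of_dotProduct_mulVec_nonneg ?_ ?_
  · -- Hermitian
    rw [hXi X, hΔ X]
    have hst : star (X.trace / (d : ℂ)) = X.trace / (d : ℂ) := by
      rw [htr]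
      simp [Complex.star_def, ← Complex.ofReal_natCast, div_eq_mul_inv, ← Complex.ofReal_inv,
        ← Complex.ofReal_mul]
    have hdiag : (Matrix.diagonal fun i => X i i).IsHermitian := by
      have hstf : (star fun i => X i i) = fun i => X i i := funext fun i => by
        rw [Pi.star_apply, hXd i, Complex.star_def, Complex.conj_ofReal]
      rw [Matrix.IsHermitian, Matrix.diagonal_conjTranspose, hstf]
    refine Matrix.IsHermitian.add (Matrix.IsHermitian.add ?_ ?_) ?_
    · rw [Matrix.IsHermitian, Matrix.conjTranspose_smul, hst, Matrix.conjTranspose_one]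
    · rw [Matrix.IsHermitian, Matrix.conjTranspose_smul]
      rw [Matrix.conjTranspose_sub, Matrix.conjTranspose_smul, hst, Matrix.conjTranspose_one,
        hdiag.eq]
      norm_num [Complex.star_def, Complex.conj_ofReal]
    · rw [Matrix.IsHermitian, Matrix.conjTranspose_smul]
      rw [Matrix.conjTranspose_sub, hX.1.eq, hdiag.eq]
      norm_num [Complex.star_def, Complex.conj_ofReal]
  · -- quadratic form
    intro y
    set N : ℝ := ∑ i, Complex.normSq (y i) with hNdef
    set T : ℝ := ∑ i, Complex.normSq (y i) * p i with hTdef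
    set Q : ℝ := ∑ k, Complex.normSq ((B *ᵥ y) k) with hQdef
    set τ : ℝ := ∑ i, p i with hτdef
    have q1 : star y ⬝ᵥ ((1 : Matrix (Fin d) (Fin d) ℂ) *ᵥ y) = ((N : ℝ) : ℂ) := by
      rw [Matrix.one_mulVec, dotProduct]
      push_cast [hNdef]
      exact Finset.sum_congr rfl fun i _ => by
        simp [Pi.star_apply, Complex.star_def, ← Complex.normSq_eq_conj_mul_self]
    have q2 : star y ⬝ᵥ (Matrix.diagonal (fun i => X i i) *ᵥ y) = ((T : ℝ) : ℂ) := by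
      rw [dotProduct]
      push_cast [hTdef]
      refine Finset.sum_congr rfl fun i _ => ?_
      rw [Matrix.mulVec_diagonal, Pi.star_apply, hXd i]
      rw [show star (y i) * (((p i : ℝ) : ℂ) * y i) = ((starRingEnd ℂ) (y i) * y i) * ((p i : ℝ) : ℂ)
        from by rw [Complex.star_def]; ring, ← Complex.normSq_eq_conj_mul_self]
    have q3 : star y ⬝ᵥ (X *ᵥ y) = ((Q : ℝ) : ℂ) := by
      rw [hB, ← Matrix.mulVec_mulVec, Matrix.dotProduct_mulVec, ← Matrix.star_mulVec,
        dotProduct]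
      push_cast [hQdef]
      exact Finset.sum_congr rfl fun k _ => by
        simp [Pi.star_apply, Complex.star_def, ← Complex.normSq_eq_conj_mul_self]
    have hform : star y ⬝ᵥ (Xi X *ᵥ y)
        = (((τ / d * N + gam * (T - τ / d * N) + gam / κ * (Q - T) : ℝ)) : ℂ) := by
      rw [hXi X, hΔ X]
      rw [Matrix.add_mulVec, Matrix.add_mulVec, Matrix.smul_mulVec,
        Matrix.smul_mulVec, Matrix.smul_mulVec, Matrix.sub_mulVec,
        Matrix.sub_mulVec, Matrix.smul_mulVec]
      simp only [dotProduct_add, dotProduct_smul, dotProduct_sub,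
        smul_eq_mul]
      rw [q1, q2, q3, htr]
      push_cast
      ring
    rw [hform]
    rw [Complex.zero_le_real]
    -- real inequality
    have hN0 : 0 ≤ N := Finset.sum_nonneg fun i _ => Complex.normSq_nonneg _
    have hT0 : 0 ≤ T := Finset.sum_nonneg fun i _ =>
      mul_nonneg (Complex.normSq_nonneg _) (Finset.sum_nonneg fun k _ => Complex.normSq_nonneg _)
    have hQ0 : 0 ≤ Q := Finset.sum_nonneg fun k _ => Complex.normSq_nonneg _
    have hτ0 : 0 ≤ τ := Finset.sum_nonneg fun i _ =>
      Finset.sum_nonneg fun k _ => Complex.normSq_nonneg _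
    have hkey : 2 * T ≤ τ * N + Q := by
      have hperk : ∀ k : Fin d, 2 * ∑ i, Complex.normSq (y i) * Complex.normSq (B k i)
          ≤ N * (∑ i, Complex.normSq (B k i)) + Complex.normSq ((B *ᵥ y) k) := by
        intro k
        have := key_ineq (fun i => y i) (fun i => (starRingEnd ℂ) (B k i))
        simp only [Complex.normSq_mul, Complex.normSq_conj, Complex.conj_conj] at this
        have hBv : (B *ᵥ y) k = ∑ i, y i * B k i := by
          rw [Matrix.mulVec, dotProduct]
          exact Finset.sum_congr rfl fun i _ => mul_comm _ _
        rw [hBv]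
        exact this
      have hsum := Finset.sum_le_sum (fun k (_ : k ∈ Finset.univ) => hperk k)
      have hL : ∑ k : Fin d, 2 * ∑ i, Complex.normSq (y i) * Complex.normSq (B k i) = 2 * T := by
        rw [← Finset.mul_sum, Finset.sum_comm]
        simp_rw [← Finset.mul_sum]
        rfl
      have hR : ∑ k : Fin d, (N * (∑ i, Complex.normSq (B k i)) + Complex.normSq ((B *ᵥ y) k))
          = τ * N + Q := by
        rw [Finset.sum_add_distrib, ← Finset.mul_sum, Finset.sum_comm]
        rw [hτdef, hQdef, hp]
        ring_nf
      rw [hL, hR] at hsum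
      exact hsum
    have hdd : (0:ℝ) < (d:ℝ) := by exact_mod_cast Nat.lt_of_lt_of_le two_pos hd
    have hd2 : (2:ℝ) ≤ (d:ℝ) := by exact_mod_cast hd
    have hden : (0:ℝ) < (d:ℝ) + 2 * κ - (d:ℝ) * κ := by nlinarith
    have hb2 : gam * ((d:ℝ) + 2 * κ - (d:ℝ) * κ) ≤ 2 * κ := (le_div_iff₀ hden).mp hbound
    have hslack : 0 ≤ 2 * κ - gam * ((d:ℝ) + 2 * κ - (d:ℝ) * κ) := by linarith
    have h2κd : (0:ℝ) < 2 * κ * (d:ℝ) := by positivity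
    have hmain : 0 ≤ (2 * κ * (d:ℝ)) * (τ / ↑d * N + gam * (T - τ / ↑d * N) + gam / κ * (Q - T)) := by
      have e : (2 * κ * (d:ℝ)) * (τ / ↑d * N + gam * (T - τ / ↑d * N) + gam / κ * (Q - T))
          = τ * N * (2 * κ - gam * ((d:ℝ) + 2 * κ - (d:ℝ) * κ)) + (d:ℝ) * gam * (1 + κ) * Q
            + (d:ℝ) * gam * (1 - κ) * (τ * N + Q - 2 * T) := by
        field_simp
        ring
      rw [e]
      have h1 : 0 ≤ τ * N * (2 * κ - gam * ((d:ℝ) + 2 * κ - (d:ℝ) * κ)) :=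
        mul_nonneg (mul_nonneg hτ0 hN0) hslack
      have h2 : 0 ≤ (d:ℝ) * gam * (1 + κ) * Q :=
        mul_nonneg (mul_nonneg (mul_nonneg hdd.le hgam0) (by linarith)) hQ0
      have h3 : 0 ≤ (d:ℝ) * gam * (1 - κ) * (τ * N + Q - 2 * T) :=
        mul_nonneg (mul_nonneg (mul_nonneg hdd.le hgam0) (by linarith)) (by linarith)
      linarith
    nlinarith [hmain, h2κd, mul_pos h2κd h2κd]
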